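/- arXiv:1403.4557 — 3 statements merged into one kernel-verified Lean document; each statement's English description precedes it below -/
import Mathlib

section
/- Let R be a finite group and let S ⊆ R. Then Cay(R,S) is a DCI-graph if and only if the regular subgroups of Aut(Cay(R,S)) that are isomorphic to R form a single conjugacy class of subgroups of Aut(Cay(R,S)), i.e. any two subgroups of Aut(Cay(R,S)) that are isomorphic to R and act regularly on R are conjugate in Aut(Cay(R,S)). -/
/-- The automorphism group of the Cayley digraph `Cay(R,S)`: all permutations `f` of `R`
with `x⁻¹ * y ∈ S ↔ (f x)⁻¹ * f y ∈ S` for all `x, y`. -/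
def CayAut (R : Type*) [Group R] (S : Set R) : Subgroup (Equiv.Perm R) where
  carrier := {f : Equiv.Perm R | ∀ x y : R, x⁻¹ * y ∈ S ↔ (f x)⁻¹ * f y ∈ S}
  one_mem' := fun x y => by simp
  mul_mem' := by
    intro a b ha hb x y
    simp only [Equiv.Perm.mul_apply]
    rw [hb x y, ha (b x) (b y)]
  inv_mem' := by
    intro a ha x y
    have h := ha (a⁻¹ x) (a⁻¹ y)
    simp only [← Equiv.Perm.mul_apply, mul_inv_cancel, Equiv.Perm.one_apply] at h
    exact h.symm


lemma mem_CayAut {R : Type*} [Group R] {S : Set R} {f : Equiv.Perm R} :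
    f ∈ CayAut R S ↔ ∀ x y : R, x⁻¹ * y ∈ S ↔ (f x)⁻¹ * f y ∈ S := Iff.rfl

/-- The left regular representation. -/
def leftReg (R : Type*) [Group R] : R →* Equiv.Perm R where
  toFun r := Equiv.mulLeft r
  map_one' := by ext x; simp
  map_mul' a b := by ext x; simp [mul_assoc]

@[simp] lemma leftReg_apply {R : Type*} [Group R] (r x : R) : leftReg R r x = r * x := rfl

lemma leftReg_injective {R : Type*} [Group R] : Function.Injective (leftReg R) := by
  intro a b h
  have := congrArg (fun g : Equiv.Perm R => g 1) h
  simpa using this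

lemma leftReg_le_CayAut {R : Type*} [Group R] (S : Set R) :
    (leftReg R).range ≤ CayAut R S := by
  rintro g ⟨r, rfl⟩ x y
  simp [mul_assoc]

/-- Forward core: under the DCI hypothesis, every regular subgroup of `CayAut R S`
isomorphic to `R` is conjugate in `CayAut R S` to the left regular representation. -/
lemma conj_leftReg {R : Type*} [Group R] {S : Set R}
    (hDCI : ∀ T : Set R,
        (∃ f : Equiv.Perm R, ∀ x y : R, x⁻¹ * y ∈ S ↔ (f x)⁻¹ * f y ∈ T) →
        ∃ φ : R ≃* R, ⇑φ '' S = T)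
    (H : Subgroup (Equiv.Perm R)) (hle : H ≤ CayAut R S)
    (htrans : ∀ x y : R, ∃ h ∈ H, h x = y)
    (hfree : ∀ h ∈ H, ∀ x : R, h x = x → h = 1)
    (e : H ≃* R) :
    ∃ a ∈ CayAut R S, ∀ g : Equiv.Perm R, g ∈ (leftReg R).range ↔ a * g * a⁻¹ ∈ H := by
  classical
  set ψ := e.symm with hψ
  set f0 : R → R := fun r => (ψ r : Equiv.Perm R) 1 with hf0
  have key : ∀ r x : R, f0 (r * x) = (ψ r : Equiv.Perm R) (f0 x) := by
    intro r x
    simp only [hf0, map_mul, Subgroup.coe_mul, Equiv.Perm.mul_apply]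
  have f0inj : Function.Injective f0 := by
    intro r r' h
    have hm0 : ((((ψ r')⁻¹ * ψ r : H)) : Equiv.Perm R) = 1 := by
      apply hfree _ (SetLike.coe_mem _) 1
      simp only [Subgroup.coe_mul, Subgroup.coe_inv, Equiv.Perm.mul_apply]
      have : (ψ r : Equiv.Perm R) 1 = (ψ r' : Equiv.Perm R) 1 := h
      rw [this]
      simp
    have hm : ((ψ r')⁻¹ * ψ r : H) = 1 := by
      exact_mod_cast hm0
    have : ψ r = ψ r' := by
      have := mul_eq_one_iff_inv_eq.mp hm
      simpa [eq_comm] using this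
    exact ψ.injective this
  have f0surj : Function.Surjective f0 := by
    intro y
    obtain ⟨h, hm, h1⟩ := htrans 1 y
    refine ⟨ψ.symm ⟨h, hm⟩, ?_⟩
    simp only [hf0, MulEquiv.apply_symm_apply]
    exact h1
  set f : R ≃ R := Equiv.ofBijective f0 ⟨f0inj, f0surj⟩ with hf
  have hfapp : ∀ x, f x = f0 x := fun x => rfl
  set T : Set R := {t | f0 t ∈ S} with hT
  have step1 : ∀ x y : R, x⁻¹ * y ∈ S ↔ (f.symm x)⁻¹ * (f.symm y) ∈ T := by
    intro x y
    set u := f.symm x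
    set v := f.symm y
    have hu : f0 u = x := f.apply_symm_apply x
    have hv : f0 v = y := f.apply_symm_apply y
    have hmem : (ψ u : Equiv.Perm R) ∈ CayAut R S := hle (SetLike.coe_mem _)
    have hc := mem_CayAut.mp hmem 1 (((ψ u : Equiv.Perm R))⁻¹ y)
    simp only [one_mul, inv_one, Equiv.Perm.coe_inv, Equiv.apply_symm_apply] at hc
    have harg : f0 (u⁻¹ * v) = ((ψ u : Equiv.Perm R))⁻¹ y := by
      have : f0 (u⁻¹ * v) = (ψ u⁻¹ : Equiv.Perm R) (f0 v) := key u⁻¹ v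
      rw [this, hv]
      simp
    have hT1 : u⁻¹ * v ∈ T ↔ ((ψ u : Equiv.Perm R))⁻¹ y ∈ S := by
      rw [hT]; simp only [Set.mem_setOf_eq, harg]
    rw [hT1]
    have hx : (ψ u : Equiv.Perm R) 1 = x := hu
    rw [hx] at hc
    exact hc.symm
  obtain ⟨φ, hφ⟩ := hDCI T ⟨(f.symm : R ≃ R), step1⟩
  have step2 : ∀ p q : R, (f0 p)⁻¹ * (f0 q) ∈ S ↔ p⁻¹ * q ∈ T := by
    intro p q
    have := step1 (f0 p) (f0 q)
    have hp : f.symm (f0 p) = p := f.symm_apply_apply p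
    have hq : f.symm (f0 q) = q := f.symm_apply_apply q
    rwa [hp, hq] at this
  have memT : ∀ u : R, u ∈ S ↔ φ u ∈ T := by
    intro u
    constructor
    · intro hu; rw [← hφ]; exact ⟨u, hu, rfl⟩
    · intro hu
      rw [← hφ] at hu
      obtain ⟨s, hs, hsu⟩ := hu
      rwa [← φ.injective hsu]
  set a : Equiv.Perm R := φ.toEquiv.trans f with ha
  have haapp : ∀ x, a x = f0 (φ x) := fun x => rfl
  have haCay : a ∈ CayAut R S := by
    intro x y
    rw [haapp, haapp, step2]
    have : (φ x)⁻¹ * φ y = φ (x⁻¹ * y) := by simp [map_mul]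
    rw [this, ← memT]
  refine ⟨a, haCay, ?_⟩
  have hconjL : ∀ r : R, a * leftReg R r * a⁻¹ = (ψ (φ r) : Equiv.Perm R) := by
    intro r
    ext x
    simp only [Equiv.Perm.mul_apply]
    rw [haapp, leftReg_apply, map_mul, key, ← haapp]
    simp
  intro g
  constructor
  · rintro ⟨r, rfl⟩
    rw [hconjL]
    exact SetLike.coe_mem _
  · intro hg
    set r : R := φ.symm (e ⟨a * g * a⁻¹, hg⟩) with hr
    have : a * leftReg R r * a⁻¹ = a * g * a⁻¹ := by
      rw [hconjL, hr]
      simp only [MulEquiv.apply_symm_apply, hψ, MulEquiv.symm_apply_apply]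
    have hgr : leftReg R r = g := by
      have h1 := mul_right_cancel this
      exact mul_left_cancel h1
    exact ⟨r, hgr⟩

/-- **Babai's criterion (Lemma 2.1).** `Cay(R,S)` is a DCI-graph if and only if any two
regular subgroups of `Aut(Cay(R,S))` isomorphic to `R` are conjugate in `Aut(Cay(R,S))`. -/
theorem stmt_1 (R : Type*) [Group R] [Fintype R] (S : Set R) :
    (∀ T : Set R,
        (∃ f : Equiv.Perm R, ∀ x y : R, x⁻¹ * y ∈ S ↔ (f x)⁻¹ * f y ∈ T) →
        ∃ φ : R ≃* R, ⇑φ '' S = T) ↔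
      (∀ H₁ H₂ : Subgroup (Equiv.Perm R),
        H₁ ≤ CayAut R S → H₂ ≤ CayAut R S →
        ((∀ x y : R, ∃ h ∈ H₁, h x = y) ∧ (∀ h ∈ H₁, ∀ x : R, h x = x → h = 1)) →
        ((∀ x y : R, ∃ h ∈ H₂, h x = y) ∧ (∀ h ∈ H₂, ∀ x : R, h x = x → h = 1)) →
        Nonempty (H₁ ≃* R) → Nonempty (H₂ ≃* R) →
        ∃ a ∈ CayAut R S, ∀ g : Equiv.Perm R, g ∈ H₁ ↔ a * g * a⁻¹ ∈ H₂) := by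
  classical
  constructor
  · -- DCI ⟹ conjugacy
    intro hDCI H₁ H₂ hle₁ hle₂ hreg₁ hreg₂ hne₁ hne₂
    obtain ⟨e₁⟩ := hne₁
    obtain ⟨e₂⟩ := hne₂
    obtain ⟨a₁, ha₁, hc₁⟩ := conj_leftReg hDCI H₁ hle₁ hreg₁.1 hreg₁.2 e₁
    obtain ⟨a₂, ha₂, hc₂⟩ := conj_leftReg hDCI H₂ hle₂ hreg₂.1 hreg₂.2 e₂
    refine ⟨a₂ * a₁⁻¹, mul_mem ha₂ (inv_mem ha₁), fun g => ?_⟩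
    have h1 := hc₁ (a₁⁻¹ * g * a₁)
    have h2 := hc₂ (a₁⁻¹ * g * a₁)
    rw [show a₁ * (a₁⁻¹ * g * a₁) * a₁⁻¹ = g by group] at h1
    rw [show a₂ * (a₁⁻¹ * g * a₁) * a₂⁻¹ = (a₂ * a₁⁻¹) * g * (a₂ * a₁⁻¹)⁻¹ by group] at h2
    exact (h1.symm.trans h2)
  · -- conjugacy ⟹ DCI
    intro hconj T hT
    obtain ⟨fp, hfp⟩ := hT
    set H₁ : Subgroup (Equiv.Perm R) := (leftReg R).range with hH₁
    set H₂ : Subgroup (Equiv.Perm R) := H₁.comap (MulAut.conj fp).toMonoidHom with hH₂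
    have memH₂ : ∀ g : Equiv.Perm R, g ∈ H₂ ↔ fp * g * fp⁻¹ ∈ H₁ := by
      intro g
      rw [hH₂, Subgroup.mem_comap]
      simp [MulAut.conj_apply]
    have hle₁ : H₁ ≤ CayAut R S := leftReg_le_CayAut S
    have hle₂ : H₂ ≤ CayAut R S := by
      intro g hg
      obtain ⟨r, hr⟩ := (memH₂ g).mp hg
      have hpt : ∀ x : R, fp (g x) = r * fp x := by
        intro x
        have h1 : leftReg R r (fp x) = (fp * g * fp⁻¹) (fp x) := by rw [hr]
        simpa [Equiv.Perm.mul_apply] using h1.symm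
      intro x y
      rw [hfp x y, hfp (g x) (g y), hpt x, hpt y]
      simp [mul_assoc]
    have htrans₁ : ∀ x y : R, ∃ h ∈ H₁, h x = y := by
      intro x y
      exact ⟨leftReg R (y * x⁻¹), ⟨y * x⁻¹, rfl⟩, by
        simp only [leftReg_apply, inv_mul_cancel_right]⟩
    have hfree₁ : ∀ h ∈ H₁, ∀ x : R, h x = x → h = 1 := by
      intro h hh x hx
      obtain ⟨r, rfl⟩ := hh
      have : r * x = x := hx
      have hr1 : r = 1 := by
        have := mul_right_cancel (a := r) (b := x) (c := 1) (by simpa using this)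
        exact this
      rw [hr1, map_one]
    have htrans₂ : ∀ x y : R, ∃ h ∈ H₂, h x = y := by
      intro x y
      refine ⟨fp⁻¹ * leftReg R (fp y * (fp x)⁻¹) * fp, ?_, ?_⟩
      · apply (memH₂ _).mpr
        rw [show fp * (fp⁻¹ * leftReg R (fp y * (fp x)⁻¹) * fp) * fp⁻¹ =
            leftReg R (fp y * (fp x)⁻¹) by group]
        exact ⟨_, rfl⟩
      · simp only [Equiv.Perm.mul_apply, leftReg_apply, inv_mul_cancel_right,
          Equiv.Perm.coe_inv, Equiv.symm_apply_apply]
    have hfree₂ : ∀ h ∈ H₂, ∀ x : R, h x = x → h = 1 := by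
      intro h hh x hx
      obtain ⟨r, hr⟩ := (memH₂ h).mp hh
      have h1 : leftReg R r (fp x) = (fp * h * fp⁻¹) (fp x) := by rw [hr]
      simp only [Equiv.Perm.mul_apply, Equiv.Perm.coe_inv, Equiv.symm_apply_apply, leftReg_apply, hx] at h1
      have hr1 : r = 1 := mul_right_cancel (b := fp x) (by simpa using h1)
      rw [hr1, map_one] at hr
      have : fp * h * fp⁻¹ = 1 := hr.symm
      calc h = fp⁻¹ * (fp * h * fp⁻¹) * fp := by group
      _ = 1 := by rw [this]; group
    have e₁ : H₁ ≃* R := (MonoidHom.ofInjective leftReg_injective).symm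
    have e₂' : H₂ ≃* H₁ :=
      { toFun := fun g => ⟨fp * g * fp⁻¹, (memH₂ g).mp g.2⟩
        invFun := fun h => ⟨fp⁻¹ * h * fp, (memH₂ _).mpr (by
          rw [show fp * (fp⁻¹ * (h : Equiv.Perm R) * fp) * fp⁻¹ = (h : Equiv.Perm R) by group]
          exact h.2)⟩
        left_inv := fun g => by
          apply Subtype.ext
          simp only
          group
        right_inv := fun h => by
          apply Subtype.ext
          simp only
          group
        map_mul' := fun g h => by
          apply Subtype.ext
          simp only [Subgroup.coe_mul]
          group }
    have e₂ : H₂ ≃* R := e₂'.trans e₁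
    obtain ⟨a, haC, hiff⟩ := hconj H₁ H₂ hle₁ hle₂ ⟨htrans₁, hfree₁⟩ ⟨htrans₂, hfree₂⟩ ⟨e₁⟩ ⟨e₂⟩
    set b : Equiv.Perm R := fp * a with hbdef
    have hb : ∀ g : Equiv.Perm R, g ∈ H₁ ↔ b * g * b⁻¹ ∈ H₁ := by
      intro g
      rw [hiff g, memH₂]
      have : fp * (a * g * a⁻¹) * fp⁻¹ = b * g * b⁻¹ := by rw [hbdef]; group
      rw [this]
    set c : R := b 1 with hcdef
    set φ0 : Equiv.Perm R := (leftReg R c)⁻¹ * b with hφ0def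
    have hφ0app : ∀ x : R, φ0 x = c⁻¹ * b x := by
      intro x
      have h : φ0 x = (leftReg R c)⁻¹ (b x) := rfl
      rw [h, show (leftReg R c)⁻¹ = leftReg R c⁻¹ by rw [← map_inv], leftReg_apply]
    have hφ01 : φ0 1 = 1 := by rw [hφ0app, ← hcdef, inv_mul_cancel]
    have hφ0inv1 : φ0⁻¹ 1 = 1 := by
      have h := congrArg (fun z => φ0⁻¹ z) hφ01
      simpa using h.symm
    have hφ0conj : ∀ g : Equiv.Perm R, g ∈ H₁ ↔ φ0 * g * φ0⁻¹ ∈ H₁ := by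
      intro g
      have hcmem : leftReg R c ∈ H₁ := ⟨c, rfl⟩
      rw [hb g]
      constructor
      · intro h
        have hrw : φ0 * g * φ0⁻¹ = (leftReg R c)⁻¹ * (b * g * b⁻¹) * (leftReg R c) := by
          rw [hφ0def]; group
        rw [hrw]
        exact mul_mem (mul_mem (inv_mem hcmem) h) hcmem
      · intro h
        have hrw : b * g * b⁻¹ = (leftReg R c) * (φ0 * g * φ0⁻¹) * (leftReg R c)⁻¹ := by
          rw [hφ0def]; group
        rw [hrw]
        exact mul_mem (mul_mem hcmem h) (inv_mem hcmem)
    have hmul : ∀ r x : R, φ0 (r * x) = φ0 r * φ0 x := by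
      intro r x
      obtain ⟨s, hs⟩ := (hφ0conj (leftReg R r)).mp ⟨r, rfl⟩
      have hs1 : s = φ0 r := by
        have h1 : leftReg R s 1 = (φ0 * leftReg R r * φ0⁻¹) 1 := by rw [hs]
        simpa [Equiv.Perm.mul_apply, hφ0inv1] using h1
      have h2 : leftReg R s (φ0 x) = (φ0 * leftReg R r * φ0⁻¹) (φ0 x) := by rw [hs]
      simp only [Equiv.Perm.mul_apply, Equiv.Perm.coe_inv, Equiv.symm_apply_apply, leftReg_apply] at h2
      rw [hs1] at h2
      exact h2.symm
    set Φ : R ≃* R := ⟨φ0, fun x y => hmul x y⟩ with hΦdef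
    have hbST : ∀ x y : R, x⁻¹ * y ∈ S ↔ (b x)⁻¹ * b y ∈ T := by
      intro x y
      rw [mem_CayAut.mp haC x y, hfp (a x) (a y)]
      exact Iff.rfl
    have hST : ∀ u : R, u ∈ S ↔ φ0 u ∈ T := by
      intro u
      have h := hbST 1 u
      simp only [inv_one, one_mul] at h
      rw [h, show (b 1)⁻¹ * b u = φ0 u from (hφ0app u).symm]
    refine ⟨Φ, ?_⟩
    ext t
    constructor
    · rintro ⟨s, hsS, rfl⟩
      exact (hST s).mp hsS
    · intro ht
      refine ⟨φ0.symm t, (hST _).mpr ?_, ?_⟩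
      · rw [Equiv.apply_symm_apply]
        exact ht
      · exact Equiv.apply_symm_apply φ0 t
end

section
/- Suppose 1 ≤ i ≤ n and τ ∈ R_L fixes every block of ℬ_i setwise but does not fix every block of ℬ_{i−1} setwise, and suppose τ' ∈ π⁻¹R_Lπ satisfies τ'(B) = τ(B) for some block B ∈ ℬ_{i−1}. Then τ'(B') = τ(B') for every block B' ∈ ℬ_{i−1}. -/
abbrev Pt (p n : ℕ) := Fin n → ZMod p

/-- The left regular representation `R_L` of `(ℤ/pℤ)^n` inside `Sym(R)`: all translations. -/
def RL (p n : ℕ) : Subgroup (Equiv.Perm (Pt p n)) where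
  carrier := {σ | ∃ r : Pt p n, ∀ x, σ x = r + x}
  one_mem' := ⟨0, fun x => by simp⟩
  mul_mem' := by
    rintro a b ⟨r, hr⟩ ⟨s, hs⟩
    refine ⟨r + s, fun x => ?_⟩
    simp [Equiv.Perm.mul_apply, hr, hs, add_assoc]
  inv_mem' := by
    rintro a ⟨r, hr⟩
    refine ⟨-r, fun x => ?_⟩
    have h := hr (a⁻¹ x)
    rw [show a (a⁻¹ x) = x from (Equiv.eq_symm_apply a).mp rfl] at h
    have h2 : -r + x = a⁻¹ x := by
      conv_lhs => rw [h]
      abel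
    exact h2.symm

/-- The conjugate `π⁻¹ R_L π` of the left regular representation. -/
def RLpi (p n : ℕ) (π : Equiv.Perm (Pt p n)) : Subgroup (Equiv.Perm (Pt p n)) where
  carrier := {σ | ∃ ρ ∈ RL p n, σ = π⁻¹ * ρ * π}
  one_mem' := ⟨1, one_mem _, by group⟩
  mul_mem' := by
    rintro a b ⟨r, hr, rfl⟩ ⟨s, hs, rfl⟩
    exact ⟨r * s, mul_mem hr hs, by group⟩
  inv_mem' := by
    rintro a ⟨r, hr, rfl⟩
    exact ⟨r⁻¹, inv_mem hr, by group⟩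

/-- `σ` belongs to the 2-closure `G^{(2)}` of `G`. -/
def twoClosed {α : Type*} (G : Subgroup (Equiv.Perm α)) (σ : Equiv.Perm α) : Prop :=
  ∀ x y : α, ∃ g ∈ G, σ x = g x ∧ σ y = g y

namespace Stmt3Aux

structure Ctx (p n : ℕ) (π : Equiv.Perm (Pt p n)) (G : Subgroup (Equiv.Perm (Pt p n)))
    (B : ℕ → Set (Set (Pt p n))) : Prop where
  hp : p.Prime
  hn : 1 ≤ n
  hG : G = RL p n ⊔ RLpi p n π
  hpG : IsPGroup p ↑G
  hBpart : ∀ i ≤ n, Setoid.IsPartition (B i)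
  hBsize : ∀ i ≤ n, ∀ b ∈ B i, Nat.card b = p ^ i
  hBinv : ∀ i ≤ n, ∀ g ∈ G, ∀ b ∈ B i, ⇑g '' b ∈ B i
  hBref : ∀ i < n, ∀ b ∈ B i, ∃ c ∈ B (i + 1), b ⊆ c

/-- The block of `B j` containing `0`. -/
def Hs {p n : ℕ} (B : ℕ → Set (Set (Pt p n))) (j : ℕ) : Set (Pt p n) :=
  {x | ∃ b, b ∈ B j ∧ (0 : Pt p n) ∈ b ∧ x ∈ b}

variable {p n : ℕ} {π : Equiv.Perm (Pt p n)} {G : Subgroup (Equiv.Perm (Pt p n))}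
  {B : ℕ → Set (Set (Pt p n))}

/-- translation permutation -/
def tr (p n : ℕ) (s : Pt p n) : Equiv.Perm (Pt p n) := Equiv.addLeft s

@[simp] lemma tr_apply (s x : Pt p n) : tr p n s x = s + x := rfl

lemma tr_mem_RL (s : Pt p n) : tr p n s ∈ RL p n := ⟨s, fun _ => rfl⟩

lemma Ctx.RL_le (C : Ctx p n π G B) : RL p n ≤ G := C.hG ▸ le_sup_left
lemma Ctx.RLpi_le (C : Ctx p n π G B) : RLpi p n π ≤ G := C.hG ▸ le_sup_right
lemma Ctx.tr_mem (C : Ctx p n π G B) (s : Pt p n) : tr p n s ∈ G := C.RL_le (tr_mem_RL s)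

lemma RLpi_trans (x y : Pt p n) : ∃ μ ∈ RLpi p n π, μ x = y := by
  refine ⟨π⁻¹ * tr p n (π y - π x) * π, ⟨tr p n (π y - π x), tr_mem_RL _, rfl⟩, ?_⟩
  simp [Equiv.Perm.mul_apply]

lemma RLpi_comm {a b : Equiv.Perm (Pt p n)} (ha : a ∈ RLpi p n π) (hb : b ∈ RLpi p n π) :
    a * b = b * a := by
  obtain ⟨ρ, ⟨u, hu⟩, rfl⟩ := ha
  obtain ⟨ρ', ⟨v, hv⟩, rfl⟩ := hb
  have h : ρ * ρ' = ρ' * ρ := Equiv.ext fun x => by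
    simp only [Equiv.Perm.mul_apply, hu, hv]; rw [add_left_comm]
  calc (π⁻¹ * ρ * π) * (π⁻¹ * ρ' * π) = π⁻¹ * (ρ * ρ') * π := by group
    _ = π⁻¹ * (ρ' * ρ) * π := by rw [h]
    _ = (π⁻¹ * ρ' * π) * (π⁻¹ * ρ * π) := by group

lemma Ctx.pow_eq_one (C : Ctx p n π G B) {g : Equiv.Perm (Pt p n)} (hg : g ∈ G) :
    ∃ k, g ^ p ^ k = 1 := by
  obtain ⟨k, hk⟩ := C.hpG ⟨g, hg⟩
  refine ⟨k, ?_⟩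
  have := congrArg (Subtype.val) hk
  simpa using this

/-- the coset of `Hs B j` through `x`. -/
def cst {p n : ℕ} (B : ℕ → Set (Set (Pt p n))) (j : ℕ) (x : Pt p n) : Set (Pt p n) :=
  {z | z - x ∈ Hs B j}

lemma mem_cst {j : ℕ} {x z : Pt p n} : z ∈ cst B j x ↔ z - x ∈ Hs B j := Iff.rfl

lemma Ctx.block_unique (C : Ctx p n π G B) {j : ℕ} (hj : j ≤ n) {b b' : Set (Pt p n)}
    (hb : b ∈ B j) (hb' : b' ∈ B j) {x : Pt p n} (hx : x ∈ b) (hx' : x ∈ b') : b = b' := by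
  obtain ⟨c, _, hc⟩ := (C.hBpart j hj).2 x
  rw [hc b ⟨hb, hx⟩, hc b' ⟨hb', hx'⟩]

lemma Ctx.H_block (C : Ctx p n π G B) {j : ℕ} (hj : j ≤ n) :
    Hs B j ∈ B j ∧ (0 : Pt p n) ∈ Hs B j := by
  obtain ⟨b, ⟨hb, h0⟩, _⟩ := (C.hBpart j hj).2 0
  have he : Hs B j = b := by
    ext x
    constructor
    · rintro ⟨b', hb', h0', hx'⟩
      rwa [C.block_unique hj hb' hb h0' h0] at hx'
    · intro hx
      exact ⟨b, hb, h0, hx⟩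
  rw [he]
  exact ⟨hb, h0⟩

lemma Ctx.cst_block (C : Ctx p n π G B) {j : ℕ} (hj : j ≤ n) (x : Pt p n) :
    cst B j x ∈ B j := by
  have him := C.hBinv j hj (tr p n x) (C.tr_mem x) _ (C.H_block hj).1
  have he : ⇑(tr p n x) '' Hs B j = cst B j x := by
    ext z
    simp only [Set.mem_image, tr_apply, mem_cst]
    constructor
    · rintro ⟨h, hh, rfl⟩; simpa using hh
    · intro hz; exact ⟨z - x, hz, by abel⟩
  rwa [he] at him

lemma mem_cst_self {j : ℕ} (C : Ctx p n π G B) (hj : j ≤ n) (x : Pt p n) : x ∈ cst B j x := by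
  simpa [mem_cst] using (C.H_block hj).2

lemma Ctx.block_eq_cst (C : Ctx p n π G B) {j : ℕ} (hj : j ≤ n) {b : Set (Pt p n)}
    (hb : b ∈ B j) {x : Pt p n} (hx : x ∈ b) : b = cst B j x :=
  C.block_unique hj hb (C.cst_block hj x) hx (mem_cst_self C hj x)

lemma Ctx.H_sub (C : Ctx p n π G B) {j : ℕ} (hj : j ≤ n) {a b : Pt p n}
    (ha : a ∈ Hs B j) (hb : b ∈ Hs B j) : a - b ∈ Hs B j := by
  have h1 : Hs B j = cst B j b := C.block_eq_cst hj (C.H_block hj).1 hb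
  rw [h1] at ha
  exact ha

lemma Ctx.H_zero (C : Ctx p n π G B) {j : ℕ} (hj : j ≤ n) : (0 : Pt p n) ∈ Hs B j :=
  (C.H_block hj).2

lemma Ctx.H_neg (C : Ctx p n π G B) {j : ℕ} (hj : j ≤ n) {a : Pt p n} (ha : a ∈ Hs B j) :
    -a ∈ Hs B j := by
  simpa using C.H_sub hj (C.H_zero hj) ha

lemma Ctx.H_add (C : Ctx p n π G B) {j : ℕ} (hj : j ≤ n) {a b : Pt p n}
    (ha : a ∈ Hs B j) (hb : b ∈ Hs B j) : a + b ∈ Hs B j := by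
  simpa [sub_neg_eq_add] using C.H_sub hj ha (C.H_neg hj hb)

lemma Ctx.H_nsmul (C : Ctx p n π G B) {j : ℕ} (hj : j ≤ n) {a : Pt p n} (ha : a ∈ Hs B j)
    (m : ℕ) : m • a ∈ Hs B j := by
  induction m with
  | zero => simpa using C.H_zero hj
  | succ k ih => rw [succ_nsmul]; exact C.H_add hj ih ha

lemma Ctx.H_smul (C : Ctx p n π G B) {j : ℕ} (hj : j ≤ n) {a : Pt p n} (ha : a ∈ Hs B j)
    (c : ZMod p) : c • a ∈ Hs B j := by
  haveI : NeZero p := ⟨C.hp.ne_zero⟩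
  have h1 : ((c.val : ℕ) : ZMod p) = c := ZMod.natCast_rightInverse c
  rw [← h1, Nat.cast_smul_eq_nsmul]
  exact C.H_nsmul hj ha _

lemma Ctx.H_mono (C : Ctx p n π G B) {j : ℕ} (hj : j + 1 ≤ n) :
    Hs B j ⊆ Hs B (j + 1) := by
  obtain ⟨c, hc, hsub⟩ := C.hBref j (by omega) _ (C.H_block (by omega : j ≤ n)).1
  have h0 : (0 : Pt p n) ∈ c := hsub (C.H_zero (by omega))
  have := C.block_unique hj hc (C.H_block hj).1 h0 (C.H_zero hj)
  rwa [this] at hsub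

end Stmt3Aux

namespace Stmt3Aux

variable {p n : ℕ} {π : Equiv.Perm (Pt p n)} {G : Subgroup (Equiv.Perm (Pt p n))}
  {B : ℕ → Set (Set (Pt p n))}

lemma Ctx.g_cst (C : Ctx p n π G B) {j : ℕ} (hj : j ≤ n) {g : Equiv.Perm (Pt p n)}
    (hg : g ∈ G) (x : Pt p n) : ⇑g '' cst B j x = cst B j (g x) := by
  have him := C.hBinv j hj g hg _ (C.cst_block hj x)
  have hgx : g x ∈ ⇑g '' cst B j x := ⟨x, mem_cst_self C hj x, rfl⟩
  exact (C.block_eq_cst hj him hgx).symm ▸ (C.block_eq_cst hj him hgx)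

lemma Ctx.g_pt (C : Ctx p n π G B) {j : ℕ} (hj : j ≤ n) {g : Equiv.Perm (Pt p n)}
    (hg : g ∈ G) (x : Pt p n) {h : Pt p n} (hh : h ∈ Hs B j) :
    g (x + h) - g x ∈ Hs B j := by
  have hmem : x + h ∈ cst B j x := by simpa [mem_cst] using hh
  have : g (x + h) ∈ cst B j (g x) := by
    rw [← C.g_cst hj hg x]; exact ⟨x + h, hmem, rfl⟩
  exact this

lemma Ctx.g_pt_rev (C : Ctx p n π G B) {j : ℕ} (hj : j ≤ n) {g : Equiv.Perm (Pt p n)}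
    (hg : g ∈ G) {u v : Pt p n} (h : g u - g v ∈ Hs B j) : u - v ∈ Hs B j := by
  have h2 := C.g_pt hj (inv_mem hg) (g v) h
  rw [show g v + (g u - g v) = g u by abel] at h2
  simpa using h2

lemma Ctx.g_surj (C : Ctx p n π G B) {j : ℕ} (hj : j ≤ n) {g : Equiv.Perm (Pt p n)}
    (hg : g ∈ G) (x : Pt p n) {z : Pt p n} (hz : z - g x ∈ Hs B j) :
    ∃ h ∈ Hs B j, g (x + h) = z := by
  have : z ∈ ⇑g '' cst B j x := by rw [C.g_cst hj hg x]; exact hz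
  obtain ⟨w, hw, rfl⟩ := this
  exact ⟨w - x, hw, by rw [show x + (w - x) = w by abel]⟩

lemma Ctx.card_H (C : Ctx p n π G B) {j : ℕ} (hj : j ≤ n) :
    Nat.card (Hs B j) = p ^ j := C.hBsize j hj _ (C.H_block hj).1

lemma Ctx.scalar_uniq (C : Ctx p n π G B) {j : ℕ} (hj : j ≤ n) {r : Pt p n}
    (hr' : r ∉ Hs B j) {a a' : ZMod p} (h : a • r - a' • r ∈ Hs B j) : a = a' := by
  haveI := Fact.mk C.hp
  by_contra hne
  have hd : (a - a') • r ∈ Hs B j := by rwa [sub_smul]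
  have : ((a - a')⁻¹ * (a - a')) • r ∈ Hs B j := by
    rw [← smul_smul]; exact C.H_smul hj hd _
  rw [inv_mul_cancel₀ (sub_ne_zero.mpr hne), one_smul] at this
  exact hr' this

lemma Ctx.decomp (C : Ctx p n π G B) {j : ℕ} (hj1 : j + 1 ≤ n) {r : Pt p n}
    (hr : r ∈ Hs B (j + 1)) (hr' : r ∉ Hs B j) {z : Pt p n} (hz : z ∈ Hs B (j + 1)) :
    ∃ a : ZMod p, z - a • r ∈ Hs B j := by
  haveI : NeZero p := ⟨C.hp.ne_zero⟩
  have hjn : j ≤ n := by omega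
  set f : ZMod p × (Hs B j) → (Hs B (j + 1)) := fun q =>
    ⟨q.1 • r + q.2.1, C.H_add hj1 (C.H_smul hj1 hr q.1) (C.H_mono hj1 q.2.2)⟩ with hf
  have hinj : Function.Injective f := by
    rintro ⟨a, h, hh⟩ ⟨a', h', hh'⟩ heq
    have heq2 : a • r + h = a' • r + h' := congrArg Subtype.val heq
    have hsub : a • r - a' • r ∈ Hs B j := by
      have : a • r - a' • r = h' - h := by
        rw [sub_eq_sub_iff_add_eq_add, heq2]; exact add_comm _ _
      rw [this]
      exact C.H_sub hjn hh' hh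
    have ha : a = a' := C.scalar_uniq hjn hr' hsub
    subst ha
    have : h = h' := by have := heq2; exact add_left_cancel this
    simp [this]
  have hcard : Nat.card (ZMod p × (Hs B j)) = Nat.card (Hs B (j + 1)) := by
    rw [Nat.card_prod, Nat.card_zmod, C.card_H hjn, C.card_H hj1, pow_succ]
    ring
  have hbij : Function.Bijective f := (Nat.bijective_iff_injective_and_card f).mpr ⟨hinj, hcard⟩
  obtain ⟨⟨a, h, hh⟩, hq⟩ := hbij.2 ⟨z, hz⟩
  have : a • r + h = z := congrArg Subtype.val hq
  exact ⟨a, by rw [← this]; simpa using hh⟩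

lemma Ctx.Hn_univ (C : Ctx p n π G B) (x : Pt p n) : x ∈ Hs B n := by
  haveI : NeZero p := ⟨C.hp.ne_zero⟩
  have hcard : Nat.card (Hs B n) = Nat.card (Pt p n) := by
    rw [C.card_H le_rfl]
    rw [Nat.card_pi]
    simp [Nat.card_zmod]
  have hbij : Function.Bijective (Subtype.val : (Hs B n) → Pt p n) :=
    (Nat.bijective_iff_injective_and_card _).mpr ⟨Subtype.val_injective, hcard⟩
  obtain ⟨⟨z, hz⟩, rfl⟩ := hbij.2 x
  exact hz

end Stmt3Aux

namespace Stmt3Aux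

variable {p n : ℕ} {π : Equiv.Perm (Pt p n)} {G : Subgroup (Equiv.Perm (Pt p n))}
  {B : ℕ → Set (Set (Pt p n))}

/-- `γ` induces the permutation `h` on the labels of the `Hs B j`-sub-blocks
(labelled by multiples of `r`) of the block through `y`. -/
abbrev Ind (B : ℕ → Set (Set (Pt p n))) (j : ℕ) (y r : Pt p n)
    (γ : Equiv.Perm (Pt p n)) (h : Equiv.Perm (ZMod p)) : Prop :=
  ∀ (a : ZMod p) (z : Pt p n), z ∈ Hs B j →
    γ (y + a • r + z) - (y + (h a) • r) ∈ Hs B j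

lemma Ctx.Kstr (C : Ctx p n π G B) {j : ℕ} (hj1 : j + 1 ≤ n) {r : Pt p n}
    (hr : r ∈ Hs B (j + 1)) (hr' : r ∉ Hs B j) {σ : Equiv.Perm (Pt p n)} (hσG : σ ∈ G)
    (hσ : ∀ y, σ y - y ∈ Hs B (j + 1)) :
    ∃ φ : Pt p n → ZMod p, (∀ y, σ y - y - φ y • r ∈ Hs B j) ∧
      (∀ y h, h ∈ Hs B (j + 1) → φ (y + h) = φ y) := by
  haveI := Fact.mk C.hp
  haveI : NeZero p := ⟨C.hp.ne_zero⟩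
  have hjn : j ≤ n := by omega
  choose φ hφ using fun y => C.decomp hj1 hr hr' (hσ y)
  refine ⟨φ, hφ, ?_⟩
  have hEj : ∀ y h, h ∈ Hs B j → φ (y + h) = φ y := by
    intro y h hh
    have h1 : σ (y + h) - (y + h) - φ y • r ∈ Hs B j := by
      have a1 := C.g_pt hjn hσG y hh
      have a2 := hφ y
      rw [show σ (y + h) - (y + h) - φ y • r
          = (σ (y + h) - σ y) + (σ y - y - φ y • r) - h by abel]
      exact C.H_sub hjn (C.H_add hjn a1 a2) hh
    have h2 := hφ (y + h)
    have h3 : φ (y + h) • r - φ y • r ∈ Hs B j := by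
      have := C.H_sub hjn h1 h2
      rwa [show σ (y + h) - (y + h) - φ y • r - (σ (y + h) - (y + h) - φ (y + h) • r)
        = φ (y + h) • r - φ y • r by abel] at this
    exact C.scalar_uniq hjn hr' h3
  have key : ∀ y (a : ZMod p), φ (y + a • r) = φ y := by
    intro y
    set F : ZMod p → ZMod p := fun a => a + φ (y + a • r) with hF
    have hFpt : ∀ a : ZMod p, σ (y + a • r) - (y + F a • r) ∈ Hs B j := by
      intro a
      have := hφ (y + a • r)
      rwa [show σ (y + a • r) - (y + a • r) - φ (y + a • r) • r
          = σ (y + a • r) - (y + (a + φ (y + a • r)) • r) by rw [add_smul]; abel] at this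
    have hFinj : Function.Injective F := by
      intro a a' hFa
      have h1 : σ (y + a • r) - σ (y + a' • r) ∈ Hs B j := by
        have := C.H_sub hjn (hFpt a) (hFpt a')
        rw [hFa] at this
        rwa [show σ (y + a • r) - (y + F a' • r) - (σ (y + a' • r) - (y + F a' • r))
          = σ (y + a • r) - σ (y + a' • r) by abel] at this
      have h2 := C.g_pt_rev hjn hσG h1
      have h3 : a • r - a' • r ∈ Hs B j := by
        rwa [show y + a • r - (y + a' • r) = a • r - a' • r by abel] at h2
      exact C.scalar_uniq hjn hr' h3
    set fP : Equiv.Perm (ZMod p) :=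
      Equiv.ofBijective F (Finite.injective_iff_bijective.mp hFinj) with hfP
    set gP : Equiv.Perm (ZMod p) := Equiv.addRight (1 : ZMod p) with hgP
    have hfPa : ∀ a, fP a = F a := fun a => rfl
    have hgPa : ∀ a, gP a = a + 1 := fun a => rfl
    have hIndσ : Ind B j y r σ fP := by
      intro a z hz
      have a1 : σ (y + a • r + z) - σ (y + a • r) ∈ Hs B j := C.g_pt hjn hσG _ hz
      have a2 := hFpt a
      rw [hfPa, show σ (y + a • r + z) - (y + F a • r)
          = (σ (y + a • r + z) - σ (y + a • r)) + (σ (y + a • r) - (y + F a • r)) by abel]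
      exact C.H_add hjn a1 a2
    have hIndtr : Ind B j y r (tr p n r) gP := by
      intro a z hz
      have : tr p n r (y + a • r + z) - (y + (gP a) • r) = z := by
        rw [hgPa, tr_apply, add_smul, one_smul]; abel
      rw [this]; exact hz
    have hIndone : Ind B j y r 1 1 := by
      intro a z hz
      simpa using hz
    have hIndmul : ∀ γ₁ h₁ γ₂ h₂, Ind B j y r γ₁ h₁ → Ind B j y r γ₂ h₂ →
        Ind B j y r (γ₁ * γ₂) (h₁ * h₂) := by
      intro γ₁ h₁ γ₂ h₂ i1 i2 a z hz
      have b2 := i2 a z hz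
      have b1 := i1 (h₂ a) _ b2
      rw [show y + h₂ a • r + (γ₂ (y + a • r + z) - (y + h₂ a • r))
          = γ₂ (y + a • r + z) by abel] at b1
      simpa [Equiv.Perm.mul_apply] using b1
    have hIndinv : ∀ γ h, γ ∈ G → Ind B j y r γ h → Ind B j y r γ⁻¹ h⁻¹ := by
      intro γ h hγ ih a z hz
      have b1 := ih (h⁻¹ a) 0 (C.H_zero hjn)
      rw [add_zero, show h (h⁻¹ a) = a from Equiv.Perm.eq_inv_iff_eq.mp rfl] at b1
      have b2 : (y + a • r + z) - γ (y + h⁻¹ a • r) ∈ Hs B j := by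
        rw [show y + a • r + z - γ (y + h⁻¹ a • r)
            = z - (γ (y + h⁻¹ a • r) - (y + a • r)) by abel]
        exact C.H_sub hjn hz b1
      have b3 := C.g_pt hjn (inv_mem hγ) (γ (y + h⁻¹ a • r)) b2
      rwa [show γ (y + h⁻¹ a • r) + (y + a • r + z - γ (y + h⁻¹ a • r)) = y + a • r + z by abel,
        show γ⁻¹ (γ (y + h⁻¹ a • r)) = y + h⁻¹ a • r from Equiv.Perm.inv_eq_iff_eq.mpr rfl] at b3
    have key2 : ∀ h ∈ Subgroup.closure ({fP, gP} : Set (Equiv.Perm (ZMod p))),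
        ∃ γ ∈ G, Ind B j y r γ h := by
      intro h hh
      induction hh using Subgroup.closure_induction with
      | mem x hx =>
        rcases hx with hx | hx
        · exact hx ▸ ⟨σ, hσG, hIndσ⟩
        · exact (Set.mem_singleton_iff.mp hx) ▸ ⟨tr p n r, C.tr_mem r, hIndtr⟩
      | one => exact ⟨1, one_mem _, hIndone⟩
      | mul x x' hx hx' ihx ihx' =>
        obtain ⟨γ₁, hγ₁, i1⟩ := ihx
        obtain ⟨γ₂, hγ₂, i2⟩ := ihx'
        exact ⟨γ₁ * γ₂, mul_mem hγ₁ hγ₂, hIndmul _ _ _ _ i1 i2⟩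
      | inv x hx ihx =>
        obtain ⟨γ, hγ, i⟩ := ihx
        exact ⟨γ⁻¹, inv_mem hγ, hIndinv _ _ hγ i⟩
    have hpow : ∀ h ∈ Subgroup.closure ({fP, gP} : Set (Equiv.Perm (ZMod p))),
        ∃ k, h ^ p ^ k = 1 := by
      intro h hh
      obtain ⟨γ, hγ, ihh⟩ := key2 h hh
      obtain ⟨k, hk⟩ := C.pow_eq_one hγ
      have hIndpow : ∀ m : ℕ, Ind B j y r (γ ^ m) (h ^ m) := by
        intro m
        induction m with
        | zero => simpa using hIndone
        | succ l ihl => rw [pow_succ, pow_succ]; exact hIndmul _ _ _ _ ihl ihh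
      have h1 := hIndpow (p ^ k)
      rw [hk] at h1
      refine ⟨k, ?_⟩
      ext a
      have h2 := h1 a 0 (C.H_zero hjn)
      rw [add_zero] at h2
      simp only [Equiv.Perm.one_apply] at h2 ⊢
      have h3 : a • r - ((h ^ p ^ k) a) • r ∈ Hs B j := by
        rwa [show y + a • r - (y + ((h ^ p ^ k) a) • r)
            = a • r - ((h ^ p ^ k) a) • r by abel] at h2
      exact (C.scalar_uniq hjn hr' h3).symm
    set Cl := Subgroup.closure ({fP, gP} : Set (Equiv.Perm (ZMod p))) with hCl
    have hfc : fP ∈ Cl := Subgroup.subset_closure (by simp)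
    have hgc : gP ∈ Cl := Subgroup.subset_closure (by simp)
    have hpCl : IsPGroup p ↥Cl := by
      intro x
      obtain ⟨k, hk⟩ := hpow x.1 x.2
      exact ⟨k, Subtype.ext (by rw [SubmonoidClass.coe_pow]; simpa using hk)⟩
    obtain ⟨m, hm⟩ := (IsPGroup.iff_card (p := p) (G := ↥Cl)).mp hpCl
    have hdvd : Nat.card ↥Cl ∣ Nat.card (Equiv.Perm (ZMod p)) :=
      Subgroup.card_subgroup_dvd_card Cl
    have hcardPerm : Nat.card (Equiv.Perm (ZMod p)) = Nat.factorial p := by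
      rw [Nat.card_eq_fintype_card, Fintype.card_perm, ZMod.card]
    have hfact : Nat.factorial p = p * Nat.factorial (p - 1) := by
      conv_lhs => rw [show p = (p - 1) + 1 by have := C.hp.one_lt; omega]
      rw [Nat.factorial_succ]
      congr 2
      have := C.hp.one_lt; omega
    have hm1 : m ≤ 1 := by
      by_contra hgt
      have h2 : p ^ 2 ∣ Nat.factorial p := by
        rw [← hcardPerm]
        have hd : p ^ 2 ∣ p ^ m := pow_dvd_pow p (by omega : 2 ≤ m)
        rw [← hm] at hd
        exact hd.trans hdvd
      have h3 : p ∣ Nat.factorial (p - 1) := by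
        rw [hfact, pow_two] at h2
        exact (mul_dvd_mul_iff_left (by have := C.hp.pos; omega : p ≠ 0)).mp h2
      have := (Nat.Prime.dvd_factorial C.hp).mp h3
      have := C.hp.one_lt; omega
    have hgne : gP ≠ 1 := by
      intro hcon
      have : gP 0 = (0 : ZMod p) := by rw [hcon]; rfl
      rw [hgPa, zero_add] at this
      exact one_ne_zero this
    have hm0 : m ≠ 0 := by
      intro hcon
      rw [hcon, pow_zero] at hm
      have : Cl = ⊥ := Subgroup.eq_bot_of_card_eq Cl hm
      rw [this] at hgc
      exact hgne (Subgroup.mem_bot.mp hgc)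
    have hcardp : Nat.card ↥Cl = p := by
      rw [hm, show m = 1 by omega, pow_one]
    have hcyc : IsCyclic ↥Cl := isCyclic_of_prime_card hcardp
    have hcomm : fP * gP = gP * fP := by
      letI : CommGroup ↥Cl := IsCyclic.commGroup
      have := mul_comm (⟨fP, hfc⟩ : ↥Cl) ⟨gP, hgc⟩
      exact congrArg Subtype.val this
    have hstep : ∀ a : ZMod p, φ (y + (a + 1) • r) = φ (y + a • r) := by
      intro a
      have h1 : fP (gP a) = gP (fP a) := by
        have := congrArg (fun q => q a) hcomm
        simpa [Equiv.Perm.mul_apply] using this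
      simp only [hfPa, hgPa, hF] at h1
      -- h1 : a + 1 + φ (y + (a+1) • r) = a + φ (y + a•r) + 1
      have h3 : a + 1 + φ (y + (a + 1) • r) = a + 1 + φ (y + a • r) := by
        rw [h1]; ring
      exact add_left_cancel h3
    have hnat : ∀ m : ℕ, φ (y + (m : ZMod p) • r) = φ y := by
      intro m
      induction m with
      | zero => simp
      | succ l ihl =>
        have : ((l + 1 : ℕ) : ZMod p) = (l : ZMod p) + 1 := by push_cast; ring
        rw [this, hstep]
        exact ihl
    intro a
    have : ((a.val : ℕ) : ZMod p) = a := ZMod.natCast_rightInverse a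
    rw [← this]
    exact hnat a.val
  intro y h hh
  obtain ⟨a, hz⟩ := C.decomp hj1 hr hr' hh
  have : y + h = (y + a • r) + (h - a • r) := by abel
  rw [this, hEj _ _ hz, key]

end Stmt3Aux

namespace Stmt3Aux

variable {p n : ℕ} {π : Equiv.Perm (Pt p n)} {G : Subgroup (Equiv.Perm (Pt p n))}
  {B : ℕ → Set (Set (Pt p n))}

lemma zmod_pow_pow (hp : p.Prime) (ρ : ZMod p) (k : ℕ) : ρ ^ (p ^ k) = ρ := by
  haveI := Fact.mk hp
  induction k with
  | zero => simp
  | succ l ih => rw [pow_succ, pow_mul, ih, ZMod.pow_card]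

lemma Ctx.master (C : Ctx p n π G B) : ∀ (d j : ℕ), j < n → n - j ≤ d →
    ∀ r, r ∈ Hs B (j + 1) → ∀ τ', τ' ∈ RLpi p n π → ∀ x₀, τ' x₀ - x₀ - r ∈ Hs B j →
    ∀ y, τ' y - y - r ∈ Hs B j := by
  intro d
  induction d with
  | zero => intro j hj hd; omega
  | succ d ih =>
    intro j hjlt hd r hr τ' hτ' x₀ h₀
    haveI := Fact.mk C.hp
    haveI : NeZero p := ⟨C.hp.ne_zero⟩
    have hjn' : j ≤ n := by omega
    have hj1 : j + 1 ≤ n := by omega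
    have hτ'G : τ' ∈ G := C.RLpi_le hτ'
    have hRLcomm : ∀ μ ∈ RLpi p n π, ∀ z, τ' (μ z) = μ (τ' z) := by
      intro μ hμ z
      have h := RLpi_comm hτ' hμ
      have := congrArg (fun q => q z) h
      simpa [Equiv.Perm.mul_apply] using this
    by_cases hrj : r ∈ Hs B j
    · -- easy case: τ' fixes one block of B j, hence all of them
      have h0' : τ' x₀ - x₀ ∈ Hs B j := by
        have := C.H_add hjn' h₀ hrj
        rwa [sub_add_cancel] at this
      intro y
      obtain ⟨μ, hμ, hμx⟩ := RLpi_trans (π := π) x₀ y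
      have hμG : μ ∈ G := C.RLpi_le hμ
      have h1 : μ (x₀ + (τ' x₀ - x₀)) - μ x₀ ∈ Hs B j := C.g_pt hjn' hμG x₀ h0'
      rw [show x₀ + (τ' x₀ - x₀) = τ' x₀ by abel] at h1
      have h2 : τ' y - y ∈ Hs B j := by
        rw [← hμx, hRLcomm μ hμ x₀]
        exact h1
      have := C.H_sub hjn' h2 hrj
      exact this
    · -- main case
      -- τ' fixes every block of B (j+1)
      have hfix1 : ∀ z, τ' z - z ∈ Hs B (j + 1) := by
        intro z
        have h0'' : τ' x₀ - x₀ ∈ Hs B (j + 1) := by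
          have := C.H_add hj1 (C.H_mono hj1 h₀) hr
          rwa [sub_add_cancel] at this
        obtain ⟨μ, hμ, hμx⟩ := RLpi_trans (π := π) x₀ z
        have hμG := C.RLpi_le hμ
        have h1 : μ (x₀ + (τ' x₀ - x₀)) - μ x₀ ∈ Hs B (j + 1) := C.g_pt hj1 hμG x₀ h0''
        rw [show x₀ + (τ' x₀ - x₀) = τ' x₀ by abel] at h1
        rw [← hμx, hRLcomm μ hμ x₀]
        exact h1
      obtain ⟨ε, hε, hεinv⟩ := C.Kstr hj1 hr hrj hτ'G hfix1
      have hε₀ : ε x₀ = 1 := by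
        have h2 := C.H_sub hjn' (hε x₀) h₀
        rw [show τ' x₀ - x₀ - ε x₀ • r - (τ' x₀ - x₀ - r)
            = (1 : ZMod p) • r - ε x₀ • r by rw [one_smul]; abel] at h2
        exact (C.scalar_uniq hjn' hrj h2).symm
      -- invariance of ε under H ℓ, by upward induction on ℓ
      have inv : ∀ ℓ, j + 1 ≤ ℓ → ℓ ≤ n → ∀ x t, t ∈ Hs B ℓ → ε (x + t) = ε x := by
        intro ℓ hℓ1
        induction ℓ, hℓ1 using Nat.le_induction with
        | base => intro _ x t ht; exact hεinv x t ht
        | succ ℓ hℓ ihl =>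
          intro hℓ1n x t ht
          have hℓn' : ℓ ≤ n := by omega
          have hℓlt : ℓ < n := by omega
          have ihℓ : ∀ x t, t ∈ Hs B ℓ → ε (x + t) = ε x := ihl hℓn'
          obtain ⟨u, hu, hux⟩ := RLpi_trans (π := π) x (x + t)
          have huG := C.RLpi_le hu
          have hP : ∀ z, u z - z - t ∈ Hs B ℓ := by
            apply ih ℓ hℓlt (by omega) t ht u hu x
            rw [hux]
            simpa using C.H_zero hℓn'
          set w : Equiv.Perm (Pt p n) := (tr p n t)⁻¹ * u with hwdef
          have hwG : w ∈ G := mul_mem (inv_mem (C.tr_mem t)) huG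
          have hwapp : ∀ z, w z = u z - t := by
            intro z
            have h5 : tr p n t (u z - t) = u z := by rw [tr_apply]; abel
            calc w z = (tr p n t)⁻¹ (u z) := rfl
              _ = u z - t := (Equiv.Perm.inv_eq_iff_eq).mpr h5.symm
          have hw : ∀ z, w z - z ∈ Hs B ℓ := by
            intro z
            rw [hwapp]
            have := hP z
            rwa [show u z - z - t = u z - t - z by abel] at this
          set v : Equiv.Perm (Pt p n) := w⁻¹ * (tr p n r * w) with hvdef
          have hvG : v ∈ G := mul_mem (inv_mem hwG) (mul_mem (C.tr_mem r) hwG)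
          have hvapp : ∀ z, w (v z) = r + w z := by
            intro z
            rw [hvdef]
            simp [Equiv.Perm.mul_apply]
          have hvfix : ∀ z, v z - z ∈ Hs B (j + 1) := by
            intro z
            obtain ⟨h, hh, hzz⟩ := C.g_surj hj1 hwG z (z := r + w z)
              (by rw [show r + w z - w z = r by abel]; exact hr)
            have hveq : v z = z + h := by
              apply w.injective
              rw [hvapp, hzz]
            rw [hveq, show z + h - z = h by abel]
            exact hh
          obtain ⟨φ, hφv, hφinv⟩ := C.Kstr hj1 hr hrj hvG hvfix
          have hφne : ∀ z, φ z ≠ 0 := by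
            intro z hzero
            have h1 := hφv z
            rw [hzero, zero_smul, sub_zero] at h1
            have h2 : w (z + (v z - z)) - w z ∈ Hs B j := C.g_pt hjn' hwG z h1
            rw [show z + (v z - z) = v z by abel, hvapp,
              show r + w z - w z = r by abel] at h2
            exact hrj h2
          have hstar : ∀ z, w (z + φ z • r) - (w z + r) ∈ Hs B j := by
            intro z
            have h1 := hφv z
            have h2 : w (z + φ z • r + (v z - z - φ z • r)) - w (z + φ z • r) ∈ Hs B j :=
              C.g_pt hjn' hwG _ h1
            rw [show z + φ z • r + (v z - z - φ z • r) = v z by abel, hvapp] at h2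
            have h3 := C.H_neg hjn' h2
            rwa [show -(r + w z - w (z + φ z • r)) = w (z + φ z • r) - (w z + r) by abel] at h3
          have hWS : ∀ z (c : ZMod p),
              w (z + c • r) - (w z + (c * (φ z)⁻¹) • r) ∈ Hs B j := by
            intro z c
            have hiter : ∀ m : ℕ, w (z + m • (φ z • r)) - (w z + m • r) ∈ Hs B j := by
              intro m
              induction m with
              | zero => simpa using C.H_zero hjn'
              | succ l ihm =>
                have hz' : φ (z + l • (φ z • r)) = φ z := by
                  have hmem : l • (φ z • r) ∈ Hs B (j + 1) :=
                    C.H_nsmul hj1 (C.H_smul hj1 hr (φ z)) l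
                  exact hφinv z _ hmem
                have h1 := hstar (z + l • (φ z • r))
                rw [hz'] at h1
                have h2 := C.H_add hjn' h1 ihm
                rw [succ_nsmul (φ z • r) l, succ_nsmul r l,
                  show z + (l • (φ z • r) + φ z • r) = z + l • (φ z • r) + φ z • r by
                    rw [add_assoc]]
                rwa [show w (z + l • (φ z • r) + φ z • r) - (w (z + l • (φ z • r)) + r)
                    + (w (z + l • (φ z • r)) - (w z + l • r))
                    = w (z + l • (φ z • r) + φ z • r) - (w z + (l • r + r)) by abel] at h2
            have hval : (((c * (φ z)⁻¹).val : ℕ) : ZMod p) = c * (φ z)⁻¹ :=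
              ZMod.natCast_rightInverse _
            have hm := hiter ((c * (φ z)⁻¹).val)
            have h1 : ((c * (φ z)⁻¹).val : ℕ) • (φ z • r) = c • r := by
              rw [← Nat.cast_smul_eq_nsmul (ZMod p), hval, smul_smul, mul_assoc,
                inv_mul_cancel₀ (hφne z), mul_one]
            have h2 : ((c * (φ z)⁻¹).val : ℕ) • r = (c * (φ z)⁻¹) • r := by
              rw [← Nat.cast_smul_eq_nsmul (ZMod p), hval]
            rwa [h1, h2] at hm
          -- the key relation: ε (z + t) = ε z * (φ z)⁻¹
          have hkey : ∀ z, ε (z + t) = ε z * (φ z)⁻¹ := by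
            intro z
            have e1 : τ' (u z) = u (τ' z) := hRLcomm u hu z
            have e2 : u z = w z + t := by rw [hwapp]; abel
            have hA : u (τ' z) - u z - ε (u z) • r ∈ Hs B j := by
              rw [← e1]; exact hε (u z)
            have b1 := C.g_pt hjn' hwG (z + ε z • r) (hε z)
            rw [show z + ε z • r + (τ' z - z - ε z • r) = τ' z by abel] at b1
            have b2 := hWS z (ε z)
            have b3 : w (τ' z) - (w z + (ε z * (φ z)⁻¹) • r) ∈ Hs B j := by
              have h6 := C.H_add hjn' b1 b2
              rwa [show w (τ' z) - w (z + ε z • r)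
                  + (w (z + ε z • r) - (w z + (ε z * (φ z)⁻¹) • r))
                  = w (τ' z) - (w z + (ε z * (φ z)⁻¹) • r) by abel] at h6
            have b4 : u (τ' z) = w (τ' z) + t := by rw [hwapp]; abel
            have b5 : u (τ' z) - (w z + t + (ε z * (φ z)⁻¹) • r) ∈ Hs B j := by
              rw [b4, show w (τ' z) + t - (w z + t + (ε z * (φ z)⁻¹) • r)
                  = w (τ' z) - (w z + (ε z * (φ z)⁻¹) • r) by abel]
              exact b3
            have h6 := C.H_sub hjn' hA b5
            rw [show u (τ' z) - u z - ε (u z) • r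
                - (u (τ' z) - (w z + t + (ε z * (φ z)⁻¹) • r))
                = (ε z * (φ z)⁻¹) • r - ε (u z) • r by rw [e2]; abel] at h6
            have e3 : ε (u z) = ε z * (φ z)⁻¹ := (C.scalar_uniq hjn' hrj h6).symm
            have e4 : ε (u z) = ε (z + t) := by
              rw [e2, show w z + t = (z + t) + (w z - z) by abel]
              exact ihℓ (z + t) (w z - z) (hw z)
            rw [← e4, e3]
          by_cases hz0 : ε (x + t) = 0
          · have h1 := hkey x
            rw [hz0] at h1
            rcases mul_eq_zero.mp h1.symm with h2 | h2
            · rw [hz0, h2]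
            · exact absurd (inv_eq_zero.mp h2) (hφne x)
          · -- all iterates have the same φ-value ρ
            have hwl : ∀ l : ℕ, (w ^ l) x - x ∈ Hs B ℓ := by
              intro l
              induction l with
              | zero => simpa using C.H_zero hℓn'
              | succ m ihm =>
                have h1 := hw ((w ^ m) x)
                have h2 := C.H_add hℓn' h1 ihm
                rw [pow_succ', Equiv.Perm.mul_apply]
                rwa [show w ((w ^ m) x) - (w ^ m) x + ((w ^ m) x - x)
                    = w ((w ^ m) x) - x by abel] at h2
            set ρ : ZMod p := ε x * (ε (x + t))⁻¹ with hρdef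
            have hφl : ∀ l : ℕ, φ ((w ^ l) x) = ρ := by
              intro l
              have h1 := hkey ((w ^ l) x)
              have e5 : ε ((w ^ l) x) = ε x := by
                rw [show (w ^ l) x = x + ((w ^ l) x - x) by abel]
                exact ihℓ x _ (hwl l)
              have e6 : ε ((w ^ l) x + t) = ε (x + t) := by
                rw [show (w ^ l) x + t = (x + t) + ((w ^ l) x - x) by abel]
                exact ihℓ (x + t) _ (hwl l)
              rw [e5, e6] at h1
              have h2 : ε (x + t) * φ ((w ^ l) x) = ε x := by
                rw [h1, mul_assoc, inv_mul_cancel₀ (hφne _), mul_one]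
              have h3 : φ ((w ^ l) x) = (ε (x + t))⁻¹ * ε x := by
                rw [← h2, ← mul_assoc, inv_mul_cancel₀ hz0, one_mul]
              rw [h3, hρdef, mul_comm]
            obtain ⟨k, hk⟩ := C.pow_eq_one hwG
            have hPm : ∀ (m : ℕ) (z : Pt p n) (c : ZMod p),
                (w ^ m) (z + c • r) -
                  ((w ^ m) z + (c * (∏ l ∈ Finset.range m, φ ((w ^ l) z))⁻¹) • r)
                  ∈ Hs B j := by
              intro m
              induction m with
              | zero =>
                intro z c
                simp only [pow_zero, Equiv.Perm.one_apply, Finset.range_zero,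
                  Finset.prod_empty, inv_one, mul_one]
                simpa using C.H_zero hjn'
              | succ m ihm =>
                intro z c
                have b1 := hWS z c
                have b2 : (w ^ m) ((w z + (c * (φ z)⁻¹) • r)
                      + (w (z + c • r) - (w z + (c * (φ z)⁻¹) • r)))
                    - (w ^ m) (w z + (c * (φ z)⁻¹) • r) ∈ Hs B j :=
                  C.g_pt hjn' (pow_mem hwG m) _ b1
                rw [show (w z + (c * (φ z)⁻¹) • r)
                    + (w (z + c • r) - (w z + (c * (φ z)⁻¹) • r)) = w (z + c • r) by abel] at b2
                have b3 := ihm (w z) (c * (φ z)⁻¹)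
                have b4 := C.H_add hjn' b2 b3
                have hprod : (∏ l ∈ Finset.range (m + 1), φ ((w ^ l) z))
                    = (∏ l ∈ Finset.range m, φ ((w ^ l) (w z))) * φ z := by
                  rw [Finset.prod_range_succ',
                    show φ ((w ^ 0) z) = φ z by simp]
                  have hcg : ∀ l ∈ Finset.range m, φ ((w ^ (l + 1)) z) = φ ((w ^ l) (w z)) :=
                    fun l _ => by rw [pow_succ, Equiv.Perm.mul_apply]
                  rw [Finset.prod_congr rfl hcg]
                rw [pow_succ, Equiv.Perm.mul_apply, Equiv.Perm.mul_apply, hprod, mul_inv,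
                  show c * ((∏ l ∈ Finset.range m, φ ((w ^ l) (w z)))⁻¹ * (φ z)⁻¹)
                    = c * (φ z)⁻¹ * (∏ l ∈ Finset.range m, φ ((w ^ l) (w z)))⁻¹ by ring]
                rwa [show (w ^ m) (w (z + c • r)) - (w ^ m) (w z + (c * (φ z)⁻¹) • r)
                    + ((w ^ m) (w z + (c * (φ z)⁻¹) • r)
                      - ((w ^ m) (w z) + (c * (φ z)⁻¹
                        * (∏ l ∈ Finset.range m, φ ((w ^ l) (w z)))⁻¹) • r))
                    = (w ^ m) (w (z + c • r)) - ((w ^ m) (w z) + (c * (φ z)⁻¹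
                        * (∏ l ∈ Finset.range m, φ ((w ^ l) (w z)))⁻¹) • r) by abel] at b4
            have hfin := hPm (p ^ k) x 1
            rw [hk] at hfin
            simp only [Equiv.Perm.one_apply] at hfin
            have h7 : (1 : ZMod p) • r
                - ((1 * (∏ l ∈ Finset.range (p ^ k), φ ((w ^ l) x))⁻¹) • r) ∈ Hs B j := by
              rwa [show x + (1 : ZMod p) • r
                  - (x + (1 * (∏ l ∈ Finset.range (p ^ k), φ ((w ^ l) x))⁻¹) • r)
                  = (1 : ZMod p) • r
                  - ((1 * (∏ l ∈ Finset.range (p ^ k), φ ((w ^ l) x))⁻¹) • r) by abel] at hfin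
            have h8 : (1 : ZMod p)
                = 1 * (∏ l ∈ Finset.range (p ^ k), φ ((w ^ l) x))⁻¹ :=
              C.scalar_uniq hjn' hrj h7
            have h9 : (∏ l ∈ Finset.range (p ^ k), φ ((w ^ l) x)) = ρ ^ (p ^ k) := by
              rw [Finset.prod_congr rfl (fun l _ => hφl l), Finset.prod_const,
                Finset.card_range]
            have hΦ1 : (∏ l ∈ Finset.range (p ^ k), φ ((w ^ l) x)) = 1 := by
              have h10 : (∏ l ∈ Finset.range (p ^ k), φ ((w ^ l) x))⁻¹ = 1 := by
                rw [← one_mul (∏ l ∈ Finset.range (p ^ k), φ ((w ^ l) x))⁻¹, ← h8]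
              exact inv_eq_one.mp h10
            have hρ1 : ρ = 1 := by
              rw [← zmod_pow_pow C.hp ρ k, ← h9, hΦ1]
            have h11 : ε x * (ε (x + t))⁻¹ = 1 := by rw [← hρdef, hρ1]
            have h12 := congrArg (fun q => q * ε (x + t)) h11
            simp only [one_mul] at h12
            rw [mul_assoc, inv_mul_cancel₀ hz0, mul_one] at h12
            exact h12.symm
      -- conclude
      intro y
      have h1 : ε y = 1 := by
        have h2 : y = x₀ + (y - x₀) := by abel
        rw [h2, inv n (by omega) le_rfl x₀ (y - x₀) (C.Hn_univ _), hε₀]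
      have h3 := hε y
      rwa [h1, one_smul] at h3

end Stmt3Aux

open Stmt3Aux in
/-- **Lemma 2.3.** If `τ ∈ R_L` fixes every block of `ℬ_i` setwise but not every block
of `ℬ_{i-1}`, and `τ' ∈ π⁻¹R_Lπ` satisfies `τ'(B) = τ(B)` for some block `B ∈ ℬ_{i-1}`,
then `τ'(B') = τ(B')` for every block `B' ∈ ℬ_{i-1}`. -/
theorem stmt_3 (p n : ℕ) (hp : p.Prime) (hn : 1 ≤ n)
    (π : Equiv.Perm (Pt p n))
    (G : Subgroup (Equiv.Perm (Pt p n))) (hG : G = RL p n ⊔ RLpi p n π)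
    (hpG : IsPGroup p ↑G)
    (B : ℕ → Set (Set (Pt p n)))
    (hBpart : ∀ i ≤ n, Setoid.IsPartition (B i))
    (hBsize : ∀ i ≤ n, ∀ b ∈ B i, Nat.card b = p ^ i)
    (hBinv : ∀ i ≤ n, ∀ g ∈ G, ∀ b ∈ B i, ⇑g '' b ∈ B i)
    (hBref : ∀ i < n, ∀ b ∈ B i, ∃ c ∈ B (i + 1), b ⊆ c)
    (i : ℕ) (hi1 : 1 ≤ i) (hin : i ≤ n)
    (τ : Equiv.Perm (Pt p n)) (hτR : τ ∈ RL p n)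
    (hfix : ∀ b ∈ B i, ⇑τ '' b = b)
    (hnotfix : ¬ ∀ b ∈ B (i - 1), ⇑τ '' b = b)
    (τ' : Equiv.Perm (Pt p n)) (hτ'mem : τ' ∈ RLpi p n π)
    (b₀ : Set (Pt p n)) (hb₀ : b₀ ∈ B (i - 1)) (hagree : ⇑τ' '' b₀ = ⇑τ '' b₀) :
    ∀ b ∈ B (i - 1), ⇑τ' '' b = ⇑τ '' b := by
  have C : Ctx p n π G B := ⟨hp, hn, hG, hpG, hBpart, hBsize, hBinv, hBref⟩
  have hτG : τ ∈ G := C.RL_le hτR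
  have hτ'G : τ' ∈ G := C.RLpi_le hτ'mem
  have hjn : i - 1 ≤ n := by omega
  have hjlt : i - 1 < n := by omega
  obtain ⟨r, hrτ⟩ := hτR
  -- r ∈ H i
  have hri : r ∈ Hs B i := by
    have himg := hfix (Hs B i) (C.H_block hin).1
    have hmem : τ 0 ∈ ⇑τ '' Hs B i := ⟨0, C.H_zero hin, rfl⟩
    rw [himg] at hmem
    rwa [hrτ 0, add_zero] at hmem
  have hri' : r ∈ Hs B (i - 1 + 1) := by
    rw [show i - 1 + 1 = i by omega]
    exact hri
  -- x₀ ∈ b₀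
  have hb₀ne : b₀.Nonempty := by
    rw [Set.nonempty_iff_ne_empty]
    rintro rfl
    exact (hBpart (i - 1) hjn).1 hb₀
  obtain ⟨x₀, hx₀⟩ := hb₀ne
  have hb₀eq : b₀ = cst B (i - 1) x₀ := C.block_eq_cst hjn hb₀ hx₀
  -- agreement at x₀
  have h₀ : τ' x₀ - x₀ - r ∈ Hs B (i - 1) := by
    have h1 : τ' x₀ ∈ ⇑τ '' b₀ := by
      rw [← hagree]
      exact ⟨x₀, hx₀, rfl⟩
    obtain ⟨z, hz, hτz⟩ := h1
    rw [hrτ z] at hτz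
    have hz2 : z - x₀ ∈ Hs B (i - 1) := by
      rw [hb₀eq] at hz
      exact hz
    rwa [show z - x₀ = τ' x₀ - x₀ - r by rw [← hτz]; abel] at hz2
  have hall := C.master (n - (i - 1)) (i - 1) hjlt le_rfl r hri' τ' hτ'mem x₀ h₀
  -- conclude for each block
  intro b hb
  have hbne : b.Nonempty := by
    rw [Set.nonempty_iff_ne_empty]
    rintro rfl
    exact (hBpart (i - 1) hjn).1 hb
  obtain ⟨x, hx⟩ := hbne
  have hbeq : b = cst B (i - 1) x := C.block_eq_cst hjn hb hx
  have h1 : ⇑τ' '' b = cst B (i - 1) (τ' x) := by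
    rw [hbeq]
    exact C.g_cst hjn hτ'G x
  have h2 : ⇑τ '' b = cst B (i - 1) (τ x) := by
    rw [hbeq]
    exact C.g_cst hjn hτG x
  have h3 : τ' x ∈ cst B (i - 1) (τ x) := by
    rw [mem_cst, hrτ x, show τ' x - (r + x) = τ' x - x - r by abel]
    exact hall x
  have h4 : cst B (i - 1) (τ' x) = cst B (i - 1) (τ x) :=
    C.block_unique hjn (C.cst_block hjn _) (C.cst_block hjn _) (mem_cst_self C hjn _) h3
  rw [h1, h2, h4]
end

section
/- Let 1 ≤ i ≤ n and 0 ≤ j < i. Let D_v be the block of ℬ_i containing v, let α ∈ R_L, and set D = α(D_v). Suppose some element of G_v does not fix setwise some block of ℬ_j contained in D. Then for every 1 ≤ k ≤ p−1, some element of G_v does not fix setwise some block of ℬ_j contained in α^k(D_v). -/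
/-- **Lemma 5.1.** Let `D_v ∈ ℬ_i` contain `v`, let `α ∈ R_L`, `D = α(D_v)`, and `j < i`.
If some element of `G_v` does not fix setwise some block of `ℬ_j` contained in `D`, then
for every `1 ≤ k ≤ p-1`, some element of `G_v` does not fix setwise some block of `ℬ_j`
contained in `α^k(D_v)`. -/
theorem stmt_12 (p n : ℕ) (hp : p.Prime) (hn : 1 ≤ n)
    (π : Equiv.Perm (Pt p n))
    (G : Subgroup (Equiv.Perm (Pt p n))) (hG : G = RL p n ⊔ RLpi p n π)
    (hpG : IsPGroup p ↑G)
    (B : ℕ → Set (Set (Pt p n)))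
    (hBpart : ∀ i ≤ n, Setoid.IsPartition (B i))
    (hBsize : ∀ i ≤ n, ∀ b ∈ B i, Nat.card b = p ^ i)
    (hBinv : ∀ i ≤ n, ∀ g ∈ G, ∀ b ∈ B i, ⇑g '' b ∈ B i)
    (hBref : ∀ i < n, ∀ b ∈ B i, ∃ c ∈ B (i + 1), b ⊆ c)
    (v : Pt p n)
    (i j : ℕ) (hi1 : 1 ≤ i) (hin : i ≤ n) (hj : j < i)
    (Dv : Set (Pt p n)) (hDv : Dv ∈ B i) (hvDv : v ∈ Dv)
    (α : Equiv.Perm (Pt p n)) (hα : α ∈ RL p n)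
    (hmove : ∃ F ∈ B j, F ⊆ ⇑α '' Dv ∧ ∃ g ∈ G, g v = v ∧ ⇑g '' F ≠ F) :
    ∀ k : ℕ, 1 ≤ k → k ≤ p - 1 →
      ∃ F ∈ B j, F ⊆ ⇑(α ^ k) '' Dv ∧ ∃ g ∈ G, g v = v ∧ ⇑g '' F ≠ F := by
  
  intro k hk1 hkp
  haveI := Fact.mk hp
  obtain ⟨r, hr⟩ := hα
  have hjn : j ≤ n := le_trans hj.le hin
  -- translations are in G
  have hTG : ∀ c : Pt p n, Equiv.addLeft c ∈ G := by
    intro c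
    rw [hG]
    exact Subgroup.mem_sup_left ⟨c, fun x => rfl⟩
  -- two blocks sharing a point are equal
  have huniq : ∀ m, m ≤ n → ∀ b1 ∈ B m, ∀ b2 ∈ B m, ∀ x : Pt p n,
      x ∈ b1 → x ∈ b2 → b1 = b2 := by
    intro m hm b1 hb1 b2 hb2 x hx1 hx2
    obtain ⟨b, -, hbu⟩ := (hBpart m hm).2 x
    rw [hbu b1 ⟨hb1, hx1⟩, hbu b2 ⟨hb2, hx2⟩]
  -- translates of blocks are blocks
  have himg : ∀ m, m ≤ n → ∀ b ∈ B m, ∀ c : Pt p n, (fun x => c + x) '' b ∈ B m := by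
    intro m hm b hb c
    have := hBinv m hm (Equiv.addLeft c) (hTG c) b hb
    simpa using this
  -- refinement from level j to level i
  have hrefine : ∀ b ∈ B j, ∃ c ∈ B i, b ⊆ c := by
    have key : ∀ m, j + m ≤ i → ∀ b ∈ B j, ∃ c ∈ B (j + m), b ⊆ c := by
      intro m
      induction m with
      | zero => exact fun _ b hb => ⟨b, hb, subset_rfl⟩
      | succ m ih =>
        intro hm b hb
        obtain ⟨c, hc, hbc⟩ := ih (by omega) b hb
        obtain ⟨c', hc', hcc'⟩ := hBref (j + m) (by omega) c hc
        exact ⟨c', hc', hbc.trans hcc'⟩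
    intro b hb
    obtain ⟨c, hc, hbc⟩ := key (i - j) (by omega) b hb
    rw [show j + (i - j) = i by omega] at hc
    exact ⟨c, hc, hbc⟩
  -- a translation stabilizing one block of B j stabilizes all of them
  have hstab : ∀ F1 ∈ B j, ∀ F2 ∈ B j, ∀ κ : Pt p n,
      (fun x => κ + x) '' F1 = F1 → (fun x => κ + x) '' F2 = F2 := by
    intro F1 hF1 F2 hF2 κ hκ
    obtain ⟨x1, hx1⟩ := Set.nonempty_iff_ne_empty.2
      (fun h => (hBpart j hjn).1 (h ▸ hF1))
    obtain ⟨y, hy⟩ := Set.nonempty_iff_ne_empty.2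
      (fun h => (hBpart j hjn).1 (h ▸ hF2))
    have hF2eq : F2 = (fun x => (y - x1) + x) '' F1 :=
      huniq j hjn F2 hF2 _ (himg j hjn F1 hF1 (y - x1)) y hy ⟨x1, hx1, sub_add_cancel y x1⟩
    calc (fun x => κ + x) '' F2
        = (fun x => κ + ((y - x1) + x)) '' F1 := by rw [hF2eq, Set.image_image]
      _ = (fun x => (y - x1) + (κ + x)) '' F1 :=
          Set.image_congr (fun x _ => add_left_comm κ (y - x1) x)
      _ = (fun x => (y - x1) + x) '' ((fun x => κ + x) '' F1) := by
          rw [Set.image_image]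
      _ = F2 := by rw [hκ, hF2eq]
  set C : ℕ → Set (Pt p n) := fun d => (fun x => d • r + x) '' Dv with hC
  have hvC : ∀ d : ℕ, d • r + v ∈ C d := fun d => ⟨v, hvDv, rfl⟩
  have hCB : ∀ d, C d ∈ B i := fun d => himg i hin Dv hDv _
  set Q : ℕ → Prop :=
    fun d => ∀ F ∈ B j, F ⊆ C d → ∀ g ∈ G, g v = v → ⇑g '' F = F with hQ
  -- key step: Q is closed under addition of indices
  have Qadd : ∀ d e : ℕ, Q d → Q e → Q (d + e) := by
    intro d e Qd Qe F' hF' hsub g hg hgv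
    set x : Pt p n := d • r + v with hx
    obtain ⟨Fx, ⟨hFx, hxFx⟩, -⟩ := (hBpart j hjn).2 x
    have hFxsub : Fx ⊆ C d := by
      obtain ⟨c, hc, hFxc⟩ := hrefine Fx hFx
      have hcCd : c = C d := huniq i hin c hc (C d) (hCB d) x (hFxc hxFx) (hvC d)
      exact hcCd ▸ hFxc
    have hgFx : ⇑g '' Fx = Fx := Qd Fx hFx hFxsub g hg hgv
    have hgx : g x ∈ Fx := hgFx ▸ ⟨x, hxFx, rfl⟩
    set κ : Pt p n := g x - x with hκdef
    have hκx : κ + x = g x := by rw [hκdef, sub_add_cancel]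
    have hκFx : (fun y => κ + y) '' Fx = Fx :=
      huniq j hjn _ (himg j hjn Fx hFx κ) Fx hFx (g x) ⟨x, hxFx, hκx⟩ hgx
    set h : Equiv.Perm (Pt p n) := (Equiv.addLeft κ)⁻¹ * g with hh
    have hhG : h ∈ G := mul_mem (inv_mem (hTG κ)) hg
    have hhx : h x = x := by
      apply (Equiv.addLeft κ).injective
      have h1 : Equiv.addLeft κ (h x) = g x := by
        rw [hh]
        simp [Equiv.Perm.mul_apply]
      rw [h1]
      exact hκx.symm
    set t : Equiv.Perm (Pt p n) := Equiv.addLeft (d • r) with ht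
    have htv : t v = x := rfl
    set g' : Equiv.Perm (Pt p n) := t⁻¹ * h * t with hg'
    have hg'G : g' ∈ G := mul_mem (mul_mem (inv_mem (hTG _)) hhG) (hTG _)
    have hg'v : g' v = v := by
      apply t.injective
      have : t (g' v) = h (t v) := by
        rw [hg']
        simp [Equiv.Perm.mul_apply]
      rw [this, htv, hhx]
    have mulim : ∀ (a b : Equiv.Perm (Pt p n)) (s : Set (Pt p n)),
        ⇑(a * b) '' s = ⇑a '' (⇑b '' s) := by
      intro a b s
      rw [← Set.image_comp]
      rfl
    have hco : ⇑t⁻¹ = fun y : Pt p n => -(d • r) + y := by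
      rw [ht]; funext y; rfl
    set F'' : Set (Pt p n) := ⇑t⁻¹ '' F' with hF''
    have hF''B : F'' ∈ B j := by
      rw [hF'', hco]; exact himg j hjn F' hF' _
    have hF''sub : F'' ⊆ C e := by
      rw [hF'', hco]
      rintro _ ⟨y, hy, rfl⟩
      obtain ⟨z, hz, hzy⟩ := hsub hy
      have hzy' : (d + e) • r + z = y := hzy
      refine ⟨z, hz, ?_⟩
      show e • r + z = -(d • r) + y
      rw [← hzy', add_nsmul, add_assoc, neg_add_cancel_left]
    have hQe := Qe F'' hF''B hF''sub g' hg'G hg'v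
    have htt : ⇑t '' F'' = F' := by
      rw [hF'', ← mulim]
      have h1 : t * t⁻¹ = 1 := by group
      rw [h1]
      simp
    have hQe' : ⇑t⁻¹ '' (⇑h '' F') = ⇑t⁻¹ '' F' := by
      have e1 : ⇑g' '' F'' = ⇑t⁻¹ '' (⇑h '' F') := by
        rw [hg', mulim, mulim, htt]
      rw [← e1, hQe, hF'']
    have hhF' : ⇑h '' F' = F' := (Set.image_injective.2 (t⁻¹).injective) hQe'
    have hgdec : g = Equiv.addLeft κ * h := by rw [hh]; group
    have hfin : ⇑g '' F' = (fun y => κ + y) '' F' := by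
      rw [hgdec, mulim, hhF']
      rw [show ⇑(Equiv.addLeft κ) = fun y : Pt p n => κ + y from funext fun y => rfl]
    rw [hfin]
    exact hstab Fx hFx F' hF' κ hκFx
  -- iterate
  have Qmul : Q k → ∀ m : ℕ, Q ((m + 1) * k) := by
    intro Qk m
    induction m with
    | zero => simpa using Qk
    | succ m ih =>
      have h2 := Qadd _ _ ih Qk
      rwa [show (m + 1) * k + k = (m + 1 + 1) * k by ring] at h2
  -- powers of α are translations
  have hαpow : ∀ m : ℕ, ∀ x, (α ^ m) x = m • r + x := by
    intro m
    induction m with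
    | zero => intro x; simp
    | succ m ih =>
      intro x
      rw [pow_succ, Equiv.Perm.mul_apply, hr, ih, succ_nsmul]
      exact (add_assoc (m • r) r x).symm
  have hαimg : ∀ m : ℕ, ⇑(α ^ m) '' Dv = C m := by
    intro m
    have : ⇑(α ^ m) = fun x => m • r + x := funext (hαpow m)
    rw [this]
  have hCmod : ∀ a b : ℕ, (a : ZMod p) = (b : ZMod p) → C a = C b := by
    intro a b hab
    have : a • r = b • r := by
      rw [← Nat.cast_smul_eq_nsmul (ZMod p) a r, ← Nat.cast_smul_eq_nsmul (ZMod p) b r, hab]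
    simp only [hC, this]
  by_contra hcon
  push_neg at hcon
  have Qk : Q k := by
    intro F hF hsub g hg hgv
    exact hcon F hF (by rwa [hαimg k]) g hg hgv
  have hk0 : (k : ZMod p) ≠ 0 := by
    intro h0
    have hdvd : p ∣ k := (ZMod.natCast_eq_zero_iff k p).1 h0
    have := Nat.le_of_dvd (by omega) hdvd
    have h2 := hp.two_le
    omega
  set u : ZMod p := (k : ZMod p)⁻¹ with hu
  have huk : (k : ZMod p) * u = 1 := mul_inv_cancel₀ hk0
  have hune : u ≠ 0 := inv_ne_zero hk0
  set m : ℕ := u.val with hm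
  have hm1 : 1 ≤ m := by
    rcases Nat.eq_zero_or_pos m with h0 | h0
    · exact absurd ((ZMod.val_eq_zero u).1 h0) hune
    · exact h0
  have Qmk : Q (m * k) := by
    have h2 := Qmul Qk (m - 1)
    rwa [show m - 1 + 1 = m by omega] at h2
  have hcast : ((m * k : ℕ) : ZMod p) = ((1 : ℕ) : ZMod p) := by
    push_cast
    rw [hm, ZMod.natCast_val, ZMod.cast_id, mul_comm]
    rw [huk]
  have Q1 : Q 1 := by
    intro F hF hsub g hg hgv
    refine Qmk F hF ?_ g hg hgv
    rwa [hCmod (m * k) 1 hcast]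
  obtain ⟨F, hF, hFsub, g, hg, hgv, hgF⟩ := hmove
  apply hgF
  apply Q1 F hF ?_ g hg hgv
  have hα1 : ⇑α '' Dv = C 1 := by
    have h1 : ⇑α = fun x => (1 : ℕ) • r + x := by
      funext x
      rw [hr, one_nsmul]
    rw [h1]
  rwa [← hα1]
end
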